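/- Let n ≥ 2, let λ₁,…,λₙ > 0 be real and μ₁, μ₂ > 0, and let K^{(λ,μ)} : D^n × D^n → M₃(ℂ) be the Type I kernel K^{(λ,μ)}(z,w) = D(z,w)·A(z,w)·D(z,w)·∏_{j=1}^n (1 − z_j w̄_j)^{−λ_j − 2δ_{1j} − 2δ_{2j}}, where D(z,w) = diag((1−z₁w̄₁)(1−z₂w̄₂), 1−z₂w̄₂, 1−z₁w̄₁) and A(z,w) has rows (1, z₁, z₂), (w̄₁, 1/λ₁ + μ₁² + z₁w̄₁, w̄₁z₂), (w̄₂, z₁w̄₂, 1/λ₂ + μ₂² + z₂w̄₂). Let Δ := diag(1, (1/λ₁ + μ₁²)^{1/2}, (1/λ₂ + μ₂²)^{1/2}), and set K₀(z,w) := Δ⁻¹ K^{(λ,μ)}(z,w) Δ⁻¹. Then for all z, w ∈ D^n the matrices K₀(z,0) and K₀(0,w) are invertible; and if A ∈ M₃(ℂ) satisfies A* = A, A² = A, and A commutes with K₀(z,0)⁻¹ K₀(z,w) K₀(0,w)⁻¹ for all z, w ∈ D^n, then A = 0 or A = I₃. -/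

import Mathlib

open Matrix

/-- The diagonal factor `D(z,w)` of the Type I kernel. -/
noncomputable def typeID {m : ℕ} (z w : Fin (m + 2) → ℂ) : Matrix (Fin 3) (Fin 3) ℂ :=
  Matrix.diagonal
    ![(1 - z 0 * star (w 0)) * (1 - z 1 * star (w 1)),
      1 - z 1 * star (w 1),
      1 - z 0 * star (w 0)]

/-- The middle factor `A(z,w)` of the Type I kernel. -/
noncomputable def typeIA {m : ℕ} (lam : Fin (m + 2) → ℝ) (μ₁ μ₂ : ℝ)
    (z w : Fin (m + 2) → ℂ) : Matrix (Fin 3) (Fin 3) ℂ :=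
  !![1, z 0, z 1;
     star (w 0), 1 / (lam 0 : ℂ) + (μ₁ : ℂ) ^ 2 + z 0 * star (w 0), star (w 0) * z 1;
     star (w 1), z 0 * star (w 1), 1 / (lam 1 : ℂ) + (μ₂ : ℂ) ^ 2 + z 1 * star (w 1)]

/-- The Type I kernel `K^{(λ,μ)}(z,w)` on the polydisc `𝔻^{m+2}`. -/
noncomputable def typeIKernel {m : ℕ} (lam : Fin (m + 2) → ℝ) (μ₁ μ₂ : ℝ)
    (z w : Fin (m + 2) → ℂ) : Matrix (Fin 3) (Fin 3) ℂ :=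
  (∏ j, (1 - z j * star (w j)) ^
      (-(lam j : ℂ) - (if j = 0 then 2 else 0) - (if j = 1 then 2 else 0))) •
    (typeID z w * typeIA lam μ₁ μ₂ z w * typeID z w)

/-- The normalizing diagonal matrix `Δ = diag(1, √(1/λ₁+μ₁²), √(1/λ₂+μ₂²))`. -/
noncomputable def typeIDelta {m : ℕ} (lam : Fin (m + 2) → ℝ) (μ₁ μ₂ : ℝ) :
    Matrix (Fin 3) (Fin 3) ℂ :=
  Matrix.diagonal
    ![1, (Real.sqrt (1 / lam 0 + μ₁ ^ 2) : ℂ), (Real.sqrt (1 / lam 1 + μ₂ ^ 2) : ℂ)]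

/-- The normalized Type I kernel `K₀ = Δ⁻¹ K^{(λ,μ)} Δ⁻¹`. -/
noncomputable def typeIK₀ {m : ℕ} (lam : Fin (m + 2) → ℝ) (μ₁ μ₂ : ℝ)
    (z w : Fin (m + 2) → ℂ) : Matrix (Fin 3) (Fin 3) ℂ :=
  (typeIDelta lam μ₁ μ₂)⁻¹ * typeIKernel lam μ₁ μ₂ z w * (typeIDelta lam μ₁ μ₂)⁻¹

open Matrix
set_option maxHeartbeats 2000000

private lemma fin_one_ne_zero' {m : ℕ} : (1 : Fin (m + 2)) ≠ 0 := by
  intro h; simpa using congrArg Fin.val h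

private lemma fin_zero_ne_one' {m : ℕ} : (0 : Fin (m + 2)) ≠ 1 := fin_one_ne_zero'.symm

private lemma vec_one' : (![(1:ℂ),1,1]) = fun _ => 1 := by
  funext i; fin_cases i <;> rfl

private lemma typeIKernel_orth {m : ℕ} (lam : Fin (m+2) → ℝ) (μ₁ μ₂ : ℝ)
    (z w : Fin (m+2) → ℂ) (h : ∀ j, z j * (starRingEnd ℂ) (w j) = 0) :
    typeIKernel lam μ₁ μ₂ z w = typeIA lam μ₁ μ₂ z w := by
  have h0 := h 0; have h1 := h 1
  unfold typeIKernel typeID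
  simp [h, h0, h1, Complex.one_cpow, vec_one', Matrix.diagonal_one]

private lemma aux_inv_a (a : ℂ) : (!![1,a,0;0,1,0;0,0,1] : Matrix (Fin 3) (Fin 3) ℂ)⁻¹ = !![1,-a,0;0,1,0;0,0,1] :=
  Matrix.inv_eq_right_inv (by
    ext i j; fin_cases i <;> fin_cases j <;>
      simp [Matrix.mul_apply, Fin.sum_univ_three, Matrix.one_apply, Matrix.vecHead, Matrix.vecTail])

private lemma aux_inv_b (b : ℂ) : (!![1,0,b;0,1,0;0,0,1] : Matrix (Fin 3) (Fin 3) ℂ)⁻¹ = !![1,0,-b;0,1,0;0,0,1] :=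
  Matrix.inv_eq_right_inv (by
    ext i j; fin_cases i <;> fin_cases j <;>
      simp [Matrix.mul_apply, Fin.sum_univ_three, Matrix.one_apply, Matrix.vecHead, Matrix.vecTail])

private lemma aux_inv_c (a : ℂ) : (!![1,0,0;a,1,0;0,0,1] : Matrix (Fin 3) (Fin 3) ℂ)⁻¹ = !![1,0,0;-a,1,0;0,0,1] :=
  Matrix.inv_eq_right_inv (by
    ext i j; fin_cases i <;> fin_cases j <;>
      simp [Matrix.mul_apply, Fin.sum_univ_three, Matrix.one_apply, Matrix.vecHead, Matrix.vecTail])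

private lemma aux_inv_d (b : ℂ) : (!![1,0,0;0,1,0;b,0,1] : Matrix (Fin 3) (Fin 3) ℂ)⁻¹ = !![1,0,0;0,1,0;-b,0,1] :=
  Matrix.inv_eq_right_inv (by
    ext i j; fin_cases i <;> fin_cases j <;>
      simp [Matrix.mul_apply, Fin.sum_univ_three, Matrix.one_apply, Matrix.vecHead, Matrix.vecTail])

private lemma aux_N1 (a b : ℂ) :
    !![1,-a,0;0,1,0;0,0,1] * !![1,a,0;0,1,0;b,a*b,1] * !![1,0,0;0,1,0;-b,0,1]
      = (!![1,0,0;0,1,0;0,a*b,1] : Matrix (Fin 3) (Fin 3) ℂ) := by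
  ext i j; fin_cases i <;> fin_cases j <;>
    simp [Matrix.mul_apply, Fin.sum_univ_three, Matrix.vecHead, Matrix.vecTail] <;> ring

private lemma aux_N2 (a b : ℂ) :
    !![1,0,-b;0,1,0;0,0,1] * !![1,0,b;a,1,a*b;0,0,1] * !![1,0,0;-a,1,0;0,0,1]
      = (!![1,0,0;0,1,a*b;0,0,1] : Matrix (Fin 3) (Fin 3) ℂ) := by
  ext i j; fin_cases i <;> fin_cases j <;>
    simp [Matrix.mul_apply, Fin.sum_univ_three, Matrix.vecHead, Matrix.vecTail] <;> ring

private lemma aux_comm1 (A : Matrix (Fin 3) (Fin 3) ℂ) (g : ℂ) (hg : g ≠ 0)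
    (h : A * !![1,0,0;0,1,0;0,g,1] = !![1,0,0;0,1,0;0,g,1] * A) :
    A 0 2 = 0 ∧ A 1 2 = 0 ∧ A 1 0 = 0 ∧ A 2 2 = A 1 1 := by
  have e : ∀ i j, (A * !![1,0,0;0,1,0;0,g,1]) i j = (!![1,0,0;0,1,0;0,g,1] * A) i j :=
    fun i j => by rw [h]
  have e01 := e 0 1; have e11 := e 1 1; have e20 := e 2 0; have e21 := e 2 1
  simp [Matrix.mul_apply, Fin.sum_univ_three, Matrix.vecHead, Matrix.vecTail, hg] at e01 e11 e20 e21
  refine ⟨e01, e11, e20, mul_left_cancel₀ hg ?_⟩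
  linear_combination e21

private lemma aux_comm2 (A : Matrix (Fin 3) (Fin 3) ℂ) (g : ℂ) (hg : g ≠ 0)
    (h : A * !![1,0,0;0,1,g;0,0,1] = !![1,0,0;0,1,g;0,0,1] * A) :
    A 0 1 = 0 ∧ A 2 1 = 0 ∧ A 2 0 = 0 ∧ A 1 1 = A 2 2 := by
  have e : ∀ i j, (A * !![1,0,0;0,1,g;0,0,1]) i j = (!![1,0,0;0,1,g;0,0,1] * A) i j :=
    fun i j => by rw [h]
  have e02 := e 0 2; have e22 := e 2 2; have e10 := e 1 0; have e12 := e 1 2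
  simp [Matrix.mul_apply, Fin.sum_univ_three, Matrix.vecHead, Matrix.vecTail, hg] at e02 e22 e10 e12
  refine ⟨e02, e22, e10, mul_left_cancel₀ hg ?_⟩
  linear_combination e12

/-- The matrices `K₀(z,0)`, `K₀(0,w)` are invertible on the polydisc, and
the only self-adjoint idempotents commuting with the normalized kernel
`K₀(z,0)⁻¹ K₀(z,w) K₀(0,w)⁻¹` for all `z, w` in the polydisc are `0` and `I₃`. -/
theorem statement14 {m : ℕ} (lam : Fin (m + 2) → ℝ) (hlam : ∀ j, 0 < lam j)
    (μ₁ μ₂ : ℝ) (hμ₁ : 0 < μ₁) (hμ₂ : 0 < μ₂) :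
    (∀ z : Fin (m + 2) → ℂ, (∀ i, ‖z i‖ < 1) →
      IsUnit (typeIK₀ lam μ₁ μ₂ z 0)) ∧
    (∀ w : Fin (m + 2) → ℂ, (∀ i, ‖w i‖ < 1) →
      IsUnit (typeIK₀ lam μ₁ μ₂ 0 w)) ∧
    (∀ A : Matrix (Fin 3) (Fin 3) ℂ, Aᴴ = A → A * A = A →
      (∀ z w : Fin (m + 2) → ℂ, (∀ i, ‖z i‖ < 1) →
        (∀ i, ‖w i‖ < 1) →
        A * ((typeIK₀ lam μ₁ μ₂ z 0)⁻¹ * typeIK₀ lam μ₁ μ₂ z w *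
              (typeIK₀ lam μ₁ μ₂ 0 w)⁻¹) =
          ((typeIK₀ lam μ₁ μ₂ z 0)⁻¹ * typeIK₀ lam μ₁ μ₂ z w *
              (typeIK₀ lam μ₁ μ₂ 0 w)⁻¹) * A) →
      A = 0 ∨ A = 1) := by
  have hl0 := hlam 0
  have hl1 := hlam 1
  have hr1 : (0:ℝ) < 1 / lam 0 + μ₁ ^ 2 := by positivity
  have hr2 : (0:ℝ) < 1 / lam 1 + μ₂ ^ 2 := by positivity
  obtain ⟨F₁, hF₁def⟩ : ∃ x : ℂ, x = ((Real.sqrt (1 / lam 0 + μ₁ ^ 2) : ℝ) : ℂ) := ⟨_, rfl⟩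
  obtain ⟨F₂, hF₂def⟩ : ∃ x : ℂ, x = ((Real.sqrt (1 / lam 1 + μ₂ ^ 2) : ℝ) : ℂ) := ⟨_, rfl⟩
  have hF₁0 : F₁ ≠ 0 := by
    rw [hF₁def]
    exact Complex.ofReal_ne_zero.mpr (ne_of_gt (Real.sqrt_pos.mpr hr1))
  have hF₂0 : F₂ ≠ 0 := by
    rw [hF₂def]
    exact Complex.ofReal_ne_zero.mpr (ne_of_gt (Real.sqrt_pos.mpr hr2))
  have hF₁sq : F₁ ^ 2 = 1 / (lam 0 : ℂ) + (μ₁ : ℂ) ^ 2 := by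
    rw [hF₁def, ← Complex.ofReal_pow, Real.sq_sqrt hr1.le]
    push_cast
    ring
  have hF₂sq : F₂ ^ 2 = 1 / (lam 1 : ℂ) + (μ₂ : ℂ) ^ 2 := by
    rw [hF₂def, ← Complex.ofReal_pow, Real.sq_sqrt hr2.le]
    push_cast
    ring
  have hΔ : (typeIDelta lam μ₁ μ₂)⁻¹ = diagonal ![1, F₁⁻¹, F₂⁻¹] := by
    apply Matrix.inv_eq_right_inv
    unfold typeIDelta
    rw [← hF₁def, ← hF₂def, Matrix.diagonal_mul_diagonal]
    ext i j
    fin_cases i <;> fin_cases j <;>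
      simp [Matrix.diagonal, Matrix.one_apply, hF₁0, hF₂0, Matrix.vecHead, Matrix.vecTail]
  obtain ⟨Zb, hZbdef⟩ : ∃ z : Fin (m+2) → ℂ, z = fun i => if i = 0 then (2⁻¹ : ℂ) else 0 := ⟨_, rfl⟩
  obtain ⟨Zc, hZcdef⟩ : ∃ z : Fin (m+2) → ℂ, z = fun i => if i = 1 then (2⁻¹ : ℂ) else 0 := ⟨_, rfl⟩
  have hZb0 : Zb 0 = 2⁻¹ := by rw [hZbdef]; simp
  have hZb1 : Zb 1 = 0 := by rw [hZbdef]; simp [fin_one_ne_zero']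
  have hZc0 : Zc 0 = 0 := by rw [hZcdef]; simp [fin_zero_ne_one']
  have hZc1 : Zc 1 = 2⁻¹ := by rw [hZcdef]; simp
  have habs : ∀ i, ‖(fun i => if i = (0 : Fin (m+2)) then (2⁻¹ : ℂ) else 0) i‖ < 1 := by
    intro i
    by_cases hi : i = 0 <;> simp [hi, map_inv₀] <;> norm_num
  have hZbabs : ∀ i, ‖Zb i‖ < 1 := by rw [hZbdef]; exact habs
  have hZcabs : ∀ i, ‖Zc i‖ < 1 := by
    intro i
    rw [hZcdef]
    by_cases hi : i = 1 <;> simp [hi, map_inv₀] <;> norm_num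
  have horthb0 : ∀ j, Zb j * (starRingEnd ℂ) ((0 : Fin (m+2) → ℂ) j) = 0 := by intro j; simp
  have horthc0 : ∀ j, Zc j * (starRingEnd ℂ) ((0 : Fin (m+2) → ℂ) j) = 0 := by intro j; simp
  have horth0 : ∀ (w : Fin (m+2) → ℂ) j, (0 : Fin (m+2) → ℂ) j * (starRingEnd ℂ) (w j) = 0 := by
    intro w j; simp
  have horthbc : ∀ j, Zb j * (starRingEnd ℂ) (Zc j) = 0 := by
    intro j
    rw [hZbdef, hZcdef]
    by_cases hj : j = 0
    · simp [hj, fin_zero_ne_one']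
    · simp [hj]
  have horthcb : ∀ j, Zc j * (starRingEnd ℂ) (Zb j) = 0 := by
    intro j
    rw [hZbdef, hZcdef]
    by_cases hj : j = 0
    · simp [hj, fin_zero_ne_one']
    · simp [hj]
  -- typeIA evaluations
  have hAb0 : typeIA lam μ₁ μ₂ Zb 0 = !![1, 2⁻¹, 0; 0, F₁^2, 0; 0, 0, F₂^2] := by
    unfold typeIA
    rw [hF₁sq, hF₂sq]
    ext i j
    fin_cases i <;> fin_cases j <;> simp [hZb0, hZb1, Matrix.vecHead, Matrix.vecTail]
  have hAc0 : typeIA lam μ₁ μ₂ Zc 0 = !![1, 0, 2⁻¹; 0, F₁^2, 0; 0, 0, F₂^2] := by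
    unfold typeIA
    rw [hF₁sq, hF₂sq]
    ext i j
    fin_cases i <;> fin_cases j <;> simp [hZc0, hZc1, Matrix.vecHead, Matrix.vecTail]
  have hA0b : typeIA lam μ₁ μ₂ 0 Zb = !![1, 0, 0; 2⁻¹, F₁^2, 0; 0, 0, F₂^2] := by
    unfold typeIA
    rw [hF₁sq, hF₂sq]
    ext i j
    fin_cases i <;> fin_cases j <;>
      simp [hZb0, hZb1, Matrix.vecHead, Matrix.vecTail, Complex.conj_ofReal]
  have hA0c : typeIA lam μ₁ μ₂ 0 Zc = !![1, 0, 0; 0, F₁^2, 0; 2⁻¹, 0, F₂^2] := by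
    unfold typeIA
    rw [hF₁sq, hF₂sq]
    ext i j
    fin_cases i <;> fin_cases j <;>
      simp [hZc0, hZc1, Matrix.vecHead, Matrix.vecTail]
  have hAbc : typeIA lam μ₁ μ₂ Zb Zc = !![1, 2⁻¹, 0; 0, F₁^2, 0; 2⁻¹, 4⁻¹, F₂^2] := by
    unfold typeIA
    rw [hF₁sq, hF₂sq]
    ext i j
    fin_cases i <;> fin_cases j <;>
      simp [hZb0, hZb1, hZc0, hZc1, Matrix.vecHead, Matrix.vecTail] <;> norm_num
  have hAcb : typeIA lam μ₁ μ₂ Zc Zb = !![1, 0, 2⁻¹; 2⁻¹, F₁^2, 4⁻¹; 0, 0, F₂^2] := by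
    unfold typeIA
    rw [hF₁sq, hF₂sq]
    ext i j
    fin_cases i <;> fin_cases j <;>
      simp [hZb0, hZb1, hZc0, hZc1, Matrix.vecHead, Matrix.vecTail] <;> norm_num
  obtain ⟨G₁, hG₁def⟩ : ∃ x : ℂ, x = 2⁻¹ * F₁⁻¹ := ⟨_, rfl⟩
  obtain ⟨G₂, hG₂def⟩ : ∃ x : ℂ, x = 2⁻¹ * F₂⁻¹ := ⟨_, rfl⟩
  have hG₁0 : G₁ ≠ 0 := by rw [hG₁def]; simp [hF₁0]
  have hG₂0 : G₂ ≠ 0 := by rw [hG₂def]; simp [hF₂0]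
  have hKb0 : typeIK₀ lam μ₁ μ₂ Zb 0 = !![1, G₁, 0; 0, 1, 0; 0, 0, 1] := by
    unfold typeIK₀
    rw [typeIKernel_orth _ _ _ _ _ horthb0, hAb0, hΔ, hG₁def]
    ext i j
    fin_cases i <;> fin_cases j <;>
      simp [Matrix.mul_apply, Fin.sum_univ_three, Matrix.diagonal, Matrix.vecHead,
        Matrix.vecTail] <;>
      field_simp <;> ring
  have hKc0 : typeIK₀ lam μ₁ μ₂ Zc 0 = !![1, 0, G₂; 0, 1, 0; 0, 0, 1] := by
    unfold typeIK₀
    rw [typeIKernel_orth _ _ _ _ _ horthc0, hAc0, hΔ, hG₂def]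
    ext i j
    fin_cases i <;> fin_cases j <;>
      simp [Matrix.mul_apply, Fin.sum_univ_three, Matrix.diagonal, Matrix.vecHead,
        Matrix.vecTail] <;>
      field_simp <;> ring
  have hK0b : typeIK₀ lam μ₁ μ₂ 0 Zb = !![1, 0, 0; G₁, 1, 0; 0, 0, 1] := by
    unfold typeIK₀
    rw [typeIKernel_orth _ _ _ _ _ (horth0 Zb), hA0b, hΔ, hG₁def]
    ext i j
    fin_cases i <;> fin_cases j <;>
      simp [Matrix.mul_apply, Fin.sum_univ_three, Matrix.diagonal, Matrix.vecHead,
        Matrix.vecTail] <;>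
      field_simp <;> ring
  have hK0c : typeIK₀ lam μ₁ μ₂ 0 Zc = !![1, 0, 0; 0, 1, 0; G₂, 0, 1] := by
    unfold typeIK₀
    rw [typeIKernel_orth _ _ _ _ _ (horth0 Zc), hA0c, hΔ, hG₂def]
    ext i j
    fin_cases i <;> fin_cases j <;>
      simp [Matrix.mul_apply, Fin.sum_univ_three, Matrix.diagonal, Matrix.vecHead,
        Matrix.vecTail] <;>
      field_simp <;> ring
  have hKbc : typeIK₀ lam μ₁ μ₂ Zb Zc = !![1, G₁, 0; 0, 1, 0; G₂, G₁*G₂, 1] := by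
    unfold typeIK₀
    rw [typeIKernel_orth _ _ _ _ _ horthbc, hAbc, hΔ, hG₁def, hG₂def]
    ext i j
    fin_cases i <;> fin_cases j <;>
      simp [Matrix.mul_apply, Fin.sum_univ_three, Matrix.diagonal, Matrix.vecHead,
        Matrix.vecTail] <;>
      field_simp <;> ring
  have hKcb : typeIK₀ lam μ₁ μ₂ Zc Zb = !![1, 0, G₂; G₁, 1, G₁*G₂; 0, 0, 1] := by
    unfold typeIK₀
    rw [typeIKernel_orth _ _ _ _ _ horthcb, hAcb, hΔ, hG₁def, hG₂def]
    ext i j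
    fin_cases i <;> fin_cases j <;>
      simp [Matrix.mul_apply, Fin.sum_univ_three, Matrix.diagonal, Matrix.vecHead,
        Matrix.vecTail] <;>
      field_simp <;> ring
  obtain ⟨sc, hscdef⟩ : ∃ x : ℂ, x = (3/4 : ℂ) ^ (-(lam 0 : ℂ) - 2) := ⟨_, rfl⟩
  have hsc0 : sc ≠ 0 := by
    rw [hscdef]
    intro h
    rcases (Complex.cpow_eq_zero_iff _ _).mp h with ⟨h1, _⟩
    norm_num at h1
  have hprod : (∏ j, (1 - Zb j * star (Zb j)) ^
      (-(lam j : ℂ) - (if j = 0 then 2 else 0) - (if j = 1 then 2 else 0))) = sc := by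
    rw [hscdef, Fintype.prod_eq_single (0 : Fin (m+2)) ?_]
    · rw [hZb0]
      norm_num [fin_zero_ne_one']
    · intro j hj
      rw [hZbdef]
      simp [hj]
  have hDbb : typeID Zb Zb = diagonal ![3/4, 1, 3/4] := by
    unfold typeID
    rw [hZb0, hZb1]
    norm_num
  have hAbb : typeIA lam μ₁ μ₂ Zb Zb = !![1, 2⁻¹, 0; 2⁻¹, F₁^2 + 4⁻¹, 0; 0, 0, F₂^2] := by
    unfold typeIA
    rw [hF₁sq, hF₂sq]
    ext i j
    fin_cases i <;> fin_cases j <;>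
      simp [hZb0, hZb1, Matrix.vecHead, Matrix.vecTail] <;> norm_num
  obtain ⟨T', hT'def⟩ : ∃ X : Matrix (Fin 3) (Fin 3) ℂ,
      X = !![9/16, 3/4 * G₁, 0; 3/4 * G₁, 1 + G₁^2, 0; 0, 0, 9/16] := ⟨_, rfl⟩
  have hKbb : typeIK₀ lam μ₁ μ₂ Zb Zb = sc • T' := by
    unfold typeIK₀ typeIKernel
    rw [hprod, hDbb, hAbb, hΔ, hT'def, hG₁def, Matrix.mul_smul, Matrix.smul_mul]
    congr 1
    ext i j
    fin_cases i <;> fin_cases j <;>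
      simp [Matrix.mul_apply, Fin.sum_univ_three, Matrix.diagonal, Matrix.vecHead,
        Matrix.vecTail] <;>
      field_simp <;> ring_nf <;> simp [hF₁0, hF₂0]
  have part1 : ∀ z : Fin (m+2) → ℂ, IsUnit (typeIK₀ lam μ₁ μ₂ z 0) := by
    intro z
    have hAz : typeIA lam μ₁ μ₂ z 0 = !![1, z 0, z 1; 0, F₁^2, 0; 0, 0, F₂^2] := by
      unfold typeIA
      rw [hF₁sq, hF₂sq]
      ext i j
      fin_cases i <;> fin_cases j <;> simp [Matrix.vecHead, Matrix.vecTail]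
    rw [Matrix.isUnit_iff_isUnit_det]
    unfold typeIK₀
    rw [typeIKernel_orth _ _ _ _ _ (fun j => by simp), hAz, hΔ, Matrix.det_mul,
      Matrix.det_mul, Matrix.det_diagonal, Matrix.det_fin_three]
    simp [Matrix.vecHead, Matrix.vecTail, Fin.prod_univ_three, isUnit_iff_ne_zero, hF₁0, hF₂0]
  have part2 : ∀ w : Fin (m+2) → ℂ, IsUnit (typeIK₀ lam μ₁ μ₂ 0 w) := by
    intro w
    have hAw : typeIA lam μ₁ μ₂ 0 w =
        !![1, 0, 0; (starRingEnd ℂ) (w 0), F₁^2, 0; (starRingEnd ℂ) (w 1), 0, F₂^2] := by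
      unfold typeIA
      rw [hF₁sq, hF₂sq]
      ext i j
      fin_cases i <;> fin_cases j <;> simp [Matrix.vecHead, Matrix.vecTail]
    rw [Matrix.isUnit_iff_isUnit_det]
    unfold typeIK₀
    rw [typeIKernel_orth _ _ _ _ _ (horth0 w), hAw, hΔ, Matrix.det_mul,
      Matrix.det_mul, Matrix.det_diagonal, Matrix.det_fin_three]
    simp [Matrix.vecHead, Matrix.vecTail, Fin.prod_univ_three, isUnit_iff_ne_zero, hF₁0, hF₂0]
  refine ⟨fun z _ => part1 z, fun w _ => part2 w, fun A hAdj hA2 hcomm => ?_⟩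
  have hGG0 : G₁ * G₂ ≠ 0 := mul_ne_zero hG₁0 hG₂0
  have hc1 := hcomm Zb Zc hZbabs hZcabs
  rw [hKb0, hKbc, hK0c, aux_inv_a, aux_inv_d, aux_N1] at hc1
  obtain ⟨h02, h12, h10, h2211⟩ := aux_comm1 A (G₁*G₂) hGG0 hc1
  have hc2 := hcomm Zc Zb hZcabs hZbabs
  rw [hKc0, hKcb, hK0b, aux_inv_b, aux_inv_c, aux_N2] at hc2
  obtain ⟨h01, h21, h20, h1122⟩ := aux_comm2 A (G₁*G₂) hGG0 hc2
  -- third point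
  obtain ⟨gr, hgrpos, hgr⟩ : ∃ g : ℝ, 0 < g ∧ G₁ = (g : ℂ) :=
    ⟨2⁻¹ * (Real.sqrt (1 / lam 0 + μ₁ ^ 2))⁻¹,
      by have := Real.sqrt_pos.mpr hr1; positivity,
      by rw [hG₁def, hF₁def]; push_cast; ring⟩
  obtain ⟨XM, hXMdef⟩ : ∃ X : Matrix (Fin 3) (Fin 3) ℂ,
      X = !![9/16 - G₁^2/2 + G₁^4, -(G₁/4 + G₁^3), 0;
             -(G₁/4 + G₁^3), 1 + G₁^2, 0; 0, 0, 9/16] := ⟨_, rfl⟩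
  have hX : !![1,-G₁,0;0,1,0;0,0,1] * T' * !![1,0,0;-G₁,1,0;0,0,1] = XM := by
    rw [hT'def, hXMdef]
    ext i j
    fin_cases i <;> fin_cases j <;>
      simp [Matrix.mul_apply, Fin.sum_univ_three, Matrix.vecHead, Matrix.vecTail] <;>
      ring
  have hc3 := hcomm Zb Zb hZbabs hZbabs
  rw [hKb0, hKbb, hK0b, aux_inv_a, aux_inv_c] at hc3
  simp only [Matrix.mul_smul, Matrix.smul_mul] at hc3
  rw [hX] at hc3
  have hc3' : A * XM = XM * A :=
    smul_right_injective (Matrix (Fin 3) (Fin 3) ℂ) hsc0 hc3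
  have hX01 : -(G₁/4 + G₁^3) ≠ 0 := by
    have hpos : (0:ℝ) < gr/4 + gr^3 := by positivity
    rw [hgr, neg_ne_zero]
    have : ((gr/4 + gr^3 : ℝ) : ℂ) ≠ 0 := Complex.ofReal_ne_zero.mpr (ne_of_gt hpos)
    push_cast at this
    convert this using 1
  have e : (A * XM) 0 1 = (XM * A) 0 1 := by rw [hc3']
  rw [hXMdef] at e
  simp [Matrix.mul_apply, Fin.sum_univ_three, Matrix.vecHead, Matrix.vecTail,
    h01, h02, h21] at e
  have h0011 : A 0 0 = A 1 1 := by
    apply mul_right_cancel₀ hX01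
    linear_combination e
  have e2 : (A * A) 0 0 = A 0 0 := by rw [hA2]
  simp [Matrix.mul_apply, Fin.sum_univ_three, h01, h02] at e2
  have hcases : A 0 0 = 0 ∨ A 0 0 = 1 := by
    rcases mul_eq_zero.mp (show A 0 0 * (A 0 0 - 1) = 0 by linear_combination e2) with h | h
    · exact Or.inl h
    · exact Or.inr (by linear_combination h)
  have hA11 : A 1 1 = A 0 0 := h0011.symm
  have hA22 : A 2 2 = A 0 0 := by rw [h2211, hA11]
  rcases hcases with hz | ho
  · left
    ext i j
    fin_cases i <;> fin_cases j <;>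
      simp [h01, h02, h10, h12, h20, h21, hA11, hA22, hz]
  · right
    ext i j
    fin_cases i <;> fin_cases j <;>
      simp [Matrix.one_apply, h01, h02, h10, h12, h20, h21, hA11, hA22, ho]
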